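/- Let ℂ∞ denote the Riemann sphere, the one-point compactification OnePoint ℂ of the complex plane with its standard topology. Let U ⊆ ℂ∞ be a simply connected open set whose boundary ∂U contains at least two points, and let V be a connected component of ℂ∞ ∖ ∂U with V ≠ U. Then U is contained in ℂ∞ ∖ cl(V), and if W denotes the connected component of ℂ∞ ∖ cl(V) that contains U, then ∂W = ∂V. In particular, ∂V is the common boundary of the two disjoint connected open sets V and W. -/

import Mathlib

open Set Topology

/-- The Riemann sphere, as the one-point compactification of `ℂ`. -/
abbrev RiemannSphere : Type := OnePoint ℂ

namespace RSAux

/-- A connected open "neighborhood of infinity" in `ℂ`: union of four half-planes. -/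
def H (r : ℝ) : Set ℂ :=
  ({z : ℂ | r < z.re} ∪ {z : ℂ | z.re < -r}) ∪ ({z : ℂ | r < z.im} ∪ {z : ℂ | z.im < -r})

lemma isPreconnected_H (r : ℝ) : IsPreconnected (H r) := by
  have hA : IsPreconnected {z : ℂ | r < z.re} :=
    (convex_halfSpace_re_gt r).isPreconnected
  have hB : IsPreconnected {z : ℂ | z.re < -r} :=
    (convex_halfSpace_re_lt (-r)).isPreconnected
  have hC : IsPreconnected {z : ℂ | r < z.im} :=
    (convex_halfSpace_im_gt r).isPreconnected
  have hD : IsPreconnected {z : ℂ | z.im < -r} :=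
    (convex_halfSpace_im_lt (-r)).isPreconnected
  have h1 : IsPreconnected ({z : ℂ | r < z.re} ∪ {z : ℂ | z.re < -r}) ∨ True := Or.inr trivial
  -- A ∪ C via point (|r|+1, |r|+1); then add B via (-(|r|+1), |r|+1); then add D via (|r|+1, -(|r|+1))
  have hr : r < |r| + 1 := lt_of_le_of_lt (le_abs_self r) (by linarith)
  have hAC : IsPreconnected ({z : ℂ | r < z.re} ∪ {z : ℂ | r < z.im}) :=
    IsPreconnected.union (Complex.mk (|r| + 1) (|r| + 1)) hr hr hA hC
  have hACB : IsPreconnected (({z : ℂ | r < z.re} ∪ {z : ℂ | r < z.im}) ∪ {z : ℂ | z.re < -r}) :=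
    IsPreconnected.union (Complex.mk (-(|r| + 1)) (|r| + 1))
      (Or.inr hr) (by simpa using neg_lt_neg hr) hAC hB
  have hACBD : IsPreconnected
      ((({z : ℂ | r < z.re} ∪ {z : ℂ | r < z.im}) ∪ {z : ℂ | z.re < -r}) ∪
        {z : ℂ | z.im < -r}) :=
    IsPreconnected.union (Complex.mk (|r| + 1) (-(|r| + 1)))
      (Or.inl (Or.inl hr)) (by simpa using neg_lt_neg hr) hACB hD
  have : H r = (({z : ℂ | r < z.re} ∪ {z : ℂ | r < z.im}) ∪ {z : ℂ | z.re < -r}) ∪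
      {z : ℂ | z.im < -r} := by
    unfold H; ext z; simp; tauto
  rw [this]; exact hACBD

lemma norm_gt_of_mem_H {r : ℝ} {z : ℂ} (hz : z ∈ H r) : r < ‖z‖ := by
  have h1 : |z.re| ≤ ‖z‖ := Complex.abs_re_le_norm z
  have h2 : |z.im| ≤ ‖z‖ := Complex.abs_im_le_norm z
  have h3 := abs_nonneg z.re
  have h4 := abs_nonneg z.im
  rcases hz with (h | h) | (h | h) <;> simp only [mem_setOf_eq] at h
  · have := le_abs_self z.re; linarith
  · have := neg_abs_le z.re; linarith
  · have := le_abs_self z.im; linarith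
  · have := neg_abs_le z.im; linarith

lemma mem_H_of_norm_gt {r : ℝ} {z : ℂ} (hz : 2 * |r| + 2 < ‖z‖) : z ∈ H r := by
  have h0 : ‖z‖ ≤ |z.re| + |z.im| := Complex.norm_le_abs_re_add_abs_im z
  have hr : r ≤ |r| := le_abs_self r
  have hr' : -|r| ≤ r := neg_abs_le r
  unfold H
  rcases le_total (|z.im|) (|z.re|) with h | h
  · have hre : |r| + 1 < |z.re| := by linarith
    rcases abs_cases z.re with ⟨he, _⟩ | ⟨he, _⟩
    · left; left; simp only [mem_setOf_eq]; linarith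
    · left; right; simp only [mem_setOf_eq]; linarith
  · have him : |r| + 1 < |z.im| := by linarith
    rcases abs_cases z.im with ⟨he, _⟩ | ⟨he, _⟩
    · right; left; simp only [mem_setOf_eq]; linarith
    · right; right; simp only [mem_setOf_eq]; linarith

open OnePoint in
lemma infty_mem_closure_H (r : ℝ) :
    (∞ : RiemannSphere) ∈ closure ((↑) '' H r : Set RiemannSphere) := by
  rw [mem_closure_iff_nhds]
  intro t ht
  rcases (OnePoint.hasBasis_nhds_infty.mem_iff).1 ht with ⟨s, ⟨-, hsc⟩, hst⟩
  rcases hsc.isBounded.subset_closedBall 0 with ⟨R, hsR⟩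
  set M : ℝ := max R (2 * |r| + 2) + 1 with hM
  have hzH : (Complex.mk M 0) ∈ H r := by
    apply mem_H_of_norm_gt
    have : ‖Complex.mk M 0‖ = |M| := by
      rw [Complex.norm_def, Complex.normSq_mk]
      simp [Real.sqrt_mul_self_eq_abs]
    rw [this]
    have : 2 * |r| + 2 < M := lt_of_le_of_lt (le_max_right R _) (by rw [hM]; linarith)
    exact lt_of_lt_of_le this (le_abs_self M)
  have hzs : (Complex.mk M 0) ∉ s := by
    intro hmem
    have := hsR hmem
    rw [Metric.mem_closedBall, dist_zero_right] at this
    have h1 : ‖Complex.mk M 0‖ = |M| := by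
      rw [Complex.norm_def, Complex.normSq_mk]
      simp [Real.sqrt_mul_self_eq_abs]
    have hRM : R < M := lt_of_le_of_lt (le_max_left R _) (by rw [hM]; linarith)
    rw [h1] at this
    have hM0 : 0 ≤ M := by
      have : (0:ℝ) ≤ max R (2 * |r| + 2) := le_max_of_le_right (by positivity)
      rw [hM]; linarith
    rw [abs_of_nonneg hM0] at this
    linarith
  exact ⟨↑(Complex.mk M 0), hst (Or.inl ⟨_, hzs, rfl⟩), ⟨_, hzH, rfl⟩⟩

open OnePoint in
lemma isPreconnected_insert_infty_H (r : ℝ) :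
    IsPreconnected (insert (∞ : RiemannSphere) ((↑) '' H r)) := by
  have h1 : IsPreconnected ((↑) '' H r : Set RiemannSphere) :=
    (isPreconnected_H r).image _ OnePoint.continuous_coe.continuousOn
  exact h1.subset_closure (subset_insert _ _)
    (insert_subset (infty_mem_closure_H r) subset_closure)

open OnePoint in
instance : LocallyConnectedSpace RiemannSphere := by
  rw [locallyConnectedSpace_iff_connected_subsets]
  intro x U hU
  cases x with
  | none =>
    rcases (OnePoint.hasBasis_nhds_infty.mem_iff).1 hU with ⟨s, ⟨hscl, hsc⟩, hst⟩
    rcases hsc.isBounded.subset_closedBall 0 with ⟨R, hsR⟩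
    set r : ℝ := max R 0 with hr
    refine ⟨insert (∞ : RiemannSphere) ((↑) '' H r), ?_, isPreconnected_insert_infty_H r, ?_⟩
    · apply Filter.mem_of_superset
        ((OnePoint.hasBasis_nhds_infty.mem_iff).2
          ⟨Metric.closedBall 0 (2 * |r| + 2), ⟨Metric.isClosed_closedBall, isCompact_closedBall 0 _⟩,
            subset_rfl⟩)
      rintro y (⟨z, hz, rfl⟩ | hy)
      · exact Or.inr ⟨z, mem_H_of_norm_gt (by
          have := hz; rw [mem_compl_iff, Metric.mem_closedBall, dist_zero_right, not_le] at this
          exact this), rfl⟩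
      · exact Or.inl hy
    · rintro y (rfl | ⟨z, hz, rfl⟩)
      · exact hst (Or.inr rfl)
      · refine hst (Or.inl ⟨z, ?_, rfl⟩)
        intro hzs
        have h1 : ‖z‖ ≤ R := by
          have := hsR hzs; rwa [Metric.mem_closedBall, dist_zero_right] at this
        have h2 : r < ‖z‖ := norm_gt_of_mem_H hz
        have : R ≤ r := le_max_left R 0
        linarith
  | some z =>
    have hU' : (↑) ⁻¹' U ∈ 𝓝 z := by
      have : U ∈ 𝓝 ((z : ℂ) : RiemannSphere) := hU
      rw [OnePoint.nhds_coe_eq, Filter.mem_map] at this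
      exact this
    rcases Metric.mem_nhds_iff.1 hU' with ⟨ε, hε, hball⟩
    refine ⟨(↑) '' Metric.ball z ε, ?_, ?_, ?_⟩
    · show _ ∈ 𝓝 ((z : ℂ) : RiemannSphere)
      rw [OnePoint.nhds_coe_eq]
      exact Filter.image_mem_map (Metric.ball_mem_nhds z hε)
    · exact ((convex_ball z ε).isPreconnected).image _ OnePoint.continuous_coe.continuousOn
    · exact image_subset_iff.2 hball

/-- Closure of a connected component of an open set, intersected with the set, is the
component itself. -/
lemma closure_connectedComponentIn_inter {X : Type*} [TopologicalSpace X]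
    [LocallyConnectedSpace X] {S : Set X} (hS : IsOpen S) (x : X) :
    closure (connectedComponentIn S x) ∩ S ⊆ connectedComponentIn S x := by
  rintro y ⟨hyc, hyS⟩
  have hD : IsOpen (connectedComponentIn S y) := hS.connectedComponentIn
  have hyD : y ∈ connectedComponentIn S y := mem_connectedComponentIn hyS
  rcases mem_closure_iff_nhds.1 hyc _ (hD.mem_nhds hyD) with ⟨w, hwD, hwC⟩
  have h1 : connectedComponentIn S y = connectedComponentIn S w := connectedComponentIn_eq hwD
  have h2 : connectedComponentIn S x = connectedComponentIn S w := connectedComponentIn_eq hwC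
  rw [h2, ← h1]; exact hyD

lemma frontier_connectedComponentIn_subset {X : Type*} [TopologicalSpace X]
    [LocallyConnectedSpace X] {S : Set X} (hS : IsOpen S) (x : X) :
    frontier (connectedComponentIn S x) ⊆ frontier S := by
  intro y hy
  have hCopen : IsOpen (connectedComponentIn S x) := hS.connectedComponentIn
  rw [hCopen.frontier_eq] at hy
  rcases hy with ⟨hyc, hyC⟩
  have hyS : y ∉ S := fun h => hyC (closure_connectedComponentIn_inter hS x ⟨hyc, h⟩)
  refine ⟨?_, by rwa [hS.interior_eq]⟩
  exact closure_mono (connectedComponentIn_subset S x) hyc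

end RSAux

/-- Let `U ⊆ ℂ∞` be a simply connected open set whose boundary
contains at least two points, and let `V` be a connected component of `ℂ∞ \ ∂U` with
`V ≠ U`.  Then `U ⊆ ℂ∞ \ cl(V)`, and, letting `W` be the connected component of
`ℂ∞ \ cl(V)` containing `U` (i.e. `W = connectedComponentIn (closure V)ᶜ x` for any
`x ∈ U`), we have `∂W = ∂V`; moreover `V` and `W` are disjoint, so `∂V` is the common
boundary of the two disjoint connected open sets `V` and `W`. -/
theorem stmt_1 (U V : Set RiemannSphere) (hUopen : IsOpen U)
    (hUsc : SimplyConnectedSpace U) (hbd : (frontier U).Nontrivial)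
    (hV : ∃ x ∈ (frontier U)ᶜ, V = connectedComponentIn (frontier U)ᶜ x)
    (hVU : V ≠ U) :
    U ⊆ (closure V)ᶜ ∧
      ∀ x ∈ U,
        frontier (connectedComponentIn (closure V)ᶜ x) = frontier V ∧
          Disjoint V (connectedComponentIn (closure V)ᶜ x) := by
  obtain ⟨x₀, hx₀, hVdef⟩ := hV
  set F : Set RiemannSphere := (frontier U)ᶜ with hF
  have hFopen : IsOpen F := isClosed_frontier.isOpen_compl
  have hVopen : IsOpen V := hVdef ▸ hFopen.connectedComponentIn
  have hVsub : V ⊆ F := hVdef ▸ connectedComponentIn_subset F x₀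
  -- U is connected and nonempty
  have hUconn : IsConnected U := by
    rw [isConnected_iff_connectedSpace]
    infer_instance
  have hUF : U ⊆ F := by
    intro u hu hfr
    exact hfr.2 (by rwa [hUopen.interior_eq])
  -- decomposition of F
  have hFeq : F = U ∪ (closure U)ᶜ := by
    rw [hF, hUopen.frontier_eq, diff_eq, compl_inter, compl_compl]
    exact union_comm _ _
  -- U is a connected component of F
  have hUcomp : ∀ u ∈ U, connectedComponentIn F u = U := by
    intro u hu
    apply subset_antisymm
    · have hconn : IsPreconnected (connectedComponentIn F u) :=
        isPreconnected_connectedComponentIn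
      have hsub : connectedComponentIn F u ⊆ U ∪ (closure U)ᶜ :=
        hFeq ▸ connectedComponentIn_subset F u
      refine hconn.subset_left_of_subset_union hUopen isClosed_closure.isOpen_compl ?_ hsub
        ⟨u, mem_connectedComponentIn (hUF hu), hu⟩
      exact disjoint_compl_right.mono_left subset_closure
    · exact hUconn.isPreconnected.subset_connectedComponentIn hu hUF
  -- V and U are disjoint
  have hVUdisj : Disjoint V U := by
    rw [Set.disjoint_left]
    intro v hvV hvU
    apply hVU
    rw [hVdef, connectedComponentIn_eq (hVdef ▸ hvV : v ∈ connectedComponentIn F x₀)]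
    exact hUcomp v hvU
  -- V ⊆ (closure U)ᶜ
  have hVclU : V ⊆ (closure U)ᶜ := by
    intro v hv
    rcases hFeq ▸ hVsub hv with h | h
    · exact absurd hv (Set.disjoint_left.1 hVUdisj.symm h)
    · exact h
  -- Claim 1 : U ⊆ (closure V)ᶜ
  have hclaim1 : U ⊆ (closure V)ᶜ := by
    intro u hu hucl
    have h1 : closure V ⊆ (interior (closure U))ᶜ := by
      rw [← closure_compl]
      exact closure_mono hVclU
    exact h1 hucl (by rw [mem_interior_iff_mem_nhds]
                      exact Filter.mem_of_superset (hUopen.mem_nhds hu) subset_closure)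
  refine ⟨hclaim1, fun x hx => ?_⟩
  set W := connectedComponentIn (closure V)ᶜ x with hW
  have hclVopen : IsOpen ((closure V)ᶜ : Set RiemannSphere) := isClosed_closure.isOpen_compl
  have hWopen : IsOpen W := hclVopen.connectedComponentIn
  have hWsub : W ⊆ (closure V)ᶜ := connectedComponentIn_subset _ _
  have hUW : U ⊆ W :=
    hUconn.isPreconnected.subset_connectedComponentIn hx hclaim1
  -- frontier V ⊆ frontier U
  have hfVU : frontier V ⊆ frontier U := by
    have h1 : frontier V ⊆ frontier F := hVdef ▸ RSAux.frontier_connectedComponentIn_subset hFopen x₀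
    have h2 : frontier F = frontier (frontier U) := frontier_compl _
    rw [h2] at h1
    exact h1.trans isClosed_frontier.frontier_subset
  constructor
  · apply subset_antisymm
    · -- frontier W ⊆ frontier V
      have h1 : frontier W ⊆ frontier ((closure V)ᶜ) :=
        RSAux.frontier_connectedComponentIn_subset hclVopen x
      have h2 : frontier ((closure V)ᶜ : Set RiemannSphere) = frontier (closure V) :=
        frontier_compl _
      have h3 : frontier (closure V) ⊆ frontier V := frontier_closure_subset
      rw [h2] at h1
      exact h1.trans h3
    · -- frontier V ⊆ frontier W
      intro y hy
      have hyclV : y ∈ closure V := hy.1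
      have hyW : y ∉ W := fun h => hWsub h hyclV
      have hyclW : y ∈ closure W :=
        closure_mono hUW (((hfVU hy).1 : y ∈ closure U))
      rw [hWopen.frontier_eq]
      exact ⟨hyclW, hyW⟩
  · exact Set.disjoint_left.2 fun v hvV hvW => hWsub hvW (subset_closure hvV)
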